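/- Let p be a prime, R a commutative ring, and h ≥ 2. Let B be an invertible h × h matrix over W(R). Let a be an (h−1) × (h−1) matrix, b an (h−1) × 1 matrix, c a 1 × (h−1) matrix, and d a 1 × 1 matrix, all with entries in W(R), such that every entry of c lies in I_R and the block matrix φ = [a, v(b); c, d] is invertible. Set B' = [f(a), b; p·f(c), f(d)] · B · φ⁻¹. Then the ideals (p, w₀(B'_{hh})) and (p, w₀(B_{hh})) of R are equal; indeed w₀(B'_{hh}) ≡ u · w₀(B_{hh}) mod p for some unit u of R/(p). -/

import Mathlib

open Matrix WittVector

private lemma span_pair_eq_of_assoc {R : Type} [CommRing R] (p x y : R)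
    (u : R ⧸ Ideal.span {p}) (hu : IsUnit u)
    (h : Ideal.Quotient.mk (Ideal.span {p}) x = u * Ideal.Quotient.mk (Ideal.span {p}) y) :
    Ideal.span {p, x} = Ideal.span {p, y} := by
  obtain ⟨u, rfl⟩ := hu
  have key : ∀ (x y : R) (u : (R ⧸ Ideal.span {p})ˣ),
      Ideal.Quotient.mk (Ideal.span {p}) x = u * Ideal.Quotient.mk (Ideal.span {p}) y →
      x ∈ Ideal.span {p, y} := by
    intro x y u h
    obtain ⟨r, hr⟩ := Ideal.Quotient.mk_surjective (I := Ideal.span {p}) (u : R ⧸ Ideal.span {p})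
    have h1 : x - r * y ∈ Ideal.span {p} := by
      rw [← Ideal.Quotient.eq_zero_iff_mem, map_sub, _root_.map_mul, hr, h, sub_self]
    have hmem : x - r * y ∈ Ideal.span {p, y} := Ideal.span_mono (by simp) h1
    have hx : x = (x - r * y) + r * y := by ring
    rw [hx]
    exact Ideal.add_mem _ hmem (Ideal.mul_mem_left _ _ (Ideal.subset_span (by simp)))
  apply le_antisymm <;> rw [Ideal.span_le] <;> rintro z hz <;> simp only [Set.mem_insert_iff,
    Set.mem_singleton_iff] at hz <;> rcases hz with rfl | rfl
  · exact Ideal.subset_span (by simp)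
  · exact key _ _ u h
  · exact Ideal.subset_span (by simp)
  · refine key _ _ u⁻¹ ?_
    rw [h, ← mul_assoc]
    norm_cast
    rw [inv_mul_cancel, Units.val_one, one_mul]

/-- Reduction of the zeroth Witt coordinate modulo `p`. -/
private noncomputable def w0bar (p : ℕ) [hp : Fact p.Prime] (R : Type) [CommRing R] :
    WittVector p R →+* R ⧸ Ideal.span {(p : R)} :=
  (Ideal.Quotient.mk (Ideal.span {(p : R)})).comp (WittVector.ghostComponent 0)

private lemma w0bar_apply {p : ℕ} [Fact p.Prime] {R : Type} [CommRing R] (x : WittVector p R) :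
    w0bar p R x = Ideal.Quotient.mk (Ideal.span {(p : R)}) (x.coeff 0) := by
  simp only [w0bar, RingHom.comp_apply, ghostComponent_apply, wittPolynomial_zero,
    MvPolynomial.aeval_X]

private lemma w0bar_verschiebung {p : ℕ} [Fact p.Prime] {R : Type} [CommRing R]
    (x : WittVector p R) : w0bar p R (verschiebung x) = 0 := by
  rw [w0bar_apply, verschiebung_coeff_zero, map_zero]

private lemma w0bar_frobenius {p : ℕ} [Fact p.Prime] {R : Type} [CommRing R]
    (x : WittVector p R) : w0bar p R (frobenius x) = (w0bar p R x) ^ p := by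
  have h1 : (frobenius x).coeff 0 = ghostComponent 1 x := by
    have := ghostComponent_frobenius (p := p) 0 x
    rwa [ghostComponent_apply, wittPolynomial_zero, MvPolynomial.aeval_X] at this
  have g1 : ghostComponent 1 x = (p : R) * x.coeff 1 + x.coeff 0 ^ p := by
    rw [ghostComponent_apply, wittPolynomial_one]
    simp
  have hp0 : (Ideal.Quotient.mk (Ideal.span {(p : R)})) (p : R) = 0 := by
    rw [Ideal.Quotient.eq_zero_iff_mem]; exact Ideal.subset_span rfl
  rw [w0bar_apply, w0bar_apply, h1, g1, map_add, _root_.map_mul, map_pow, hp0, zero_mul, zero_add]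

open Matrix WittVector in
theorem display_change_of_coordinates_ideal_invariant (p : ℕ) [Fact p.Prime]
    (R : Type) [CommRing R] (n : ℕ) (hn : 1 ≤ n)
    (B : Matrix (Fin n ⊕ Fin 1) (Fin n ⊕ Fin 1) (WittVector p R)) (hB : IsUnit B)
    (a : Matrix (Fin n) (Fin n) (WittVector p R))
    (b : Matrix (Fin n) (Fin 1) (WittVector p R))
    (c : Matrix (Fin 1) (Fin n) (WittVector p R))
    (d : Matrix (Fin 1) (Fin 1) (WittVector p R))
    (hc : ∀ i j, c i j ∈
      Set.range ⇑(WittVector.verschiebung : WittVector p R →+ WittVector p R))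
    (φ : Matrix (Fin n ⊕ Fin 1) (Fin n ⊕ Fin 1) (WittVector p R))
    (hφdef : φ = Matrix.fromBlocks a (b.map ⇑(WittVector.verschiebung (p := p) (R := R))) c d)
    (hφ : IsUnit φ)
    (B' : Matrix (Fin n ⊕ Fin 1) (Fin n ⊕ Fin 1) (WittVector p R))
    (hB'def : B' = Matrix.fromBlocks
        (a.map ⇑(WittVector.frobenius : WittVector p R →+* WittVector p R)) b
        ((p : WittVector p R) • c.map ⇑(WittVector.frobenius : WittVector p R →+* WittVector p R))
        (d.map ⇑(WittVector.frobenius : WittVector p R →+* WittVector p R)) * B * φ⁻¹) :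
    Ideal.span {(p : R), (B' (Sum.inr 0) (Sum.inr 0)).coeff 0} =
      Ideal.span {(p : R), (B (Sum.inr 0) (Sum.inr 0)).coeff 0} ∧
    ∃ u : R ⧸ Ideal.span {(p : R)}, IsUnit u ∧
      Ideal.Quotient.mk (Ideal.span {(p : R)}) ((B' (Sum.inr 0) (Sum.inr 0)).coeff 0) =
        u * Ideal.Quotient.mk (Ideal.span {(p : R)}) ((B (Sum.inr 0) (Sum.inr 0)).coeff 0) := by
  classical
  set π : WittVector p R →+* R ⧸ Ideal.span {(p : R)} := w0bar p R with hπdef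
  have hpS : ((p : ℕ) : R ⧸ Ideal.span {(p : R)}) = 0 := by
    rw [← map_natCast (Ideal.Quotient.mk (Ideal.span {(p : R)})) p,
      Ideal.Quotient.eq_zero_iff_mem]
    exact Ideal.subset_span rfl
  have hφdet : IsUnit φ.det := (Matrix.isUnit_iff_isUnit_det φ).mp hφ
  have h1 : φ * φ⁻¹ = 1 := Matrix.mul_nonsing_inv φ hφdet
  have h2 : φ⁻¹ * φ = 1 := Matrix.nonsing_inv_mul φ hφdet
  set Ψ : Matrix (Fin n ⊕ Fin 1) (Fin n ⊕ Fin 1) (R ⧸ Ideal.span {(p : R)}) := φ⁻¹.map π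
    with hΨdef
  set A1 : Matrix (Fin n) (Fin n) (R ⧸ Ideal.span {(p : R)}) := a.map π with hA1
  set D1 : Matrix (Fin 1) (Fin 1) (R ⧸ Ideal.span {(p : R)}) := d.map π with hD1
  have hφmap : φ.map π = Matrix.fromBlocks A1 0 0 D1 := by
    have hbv : (b.map ⇑(WittVector.verschiebung (p := p) (R := R))).map π = 0 := by
      ext i j
      simp [Matrix.map_apply, hπdef, w0bar_verschiebung]
    have hcm : c.map π = 0 := by
      ext i j
      obtain ⟨x, hx⟩ := hc i j
      simp [Matrix.map_apply, ← hx, hπdef, w0bar_verschiebung]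
    rw [hφdef, Matrix.fromBlocks_map, hbv, hcm]
  have hΦΨ : Matrix.fromBlocks A1 0 0 D1 * Ψ = 1 := by
    rw [← hφmap, hΨdef, ← Matrix.map_mul, h1, Matrix.map_one π (map_zero π) (map_one π)]
  have hΨΦ : Ψ * Matrix.fromBlocks A1 0 0 D1 = 1 := by
    rw [← hφmap, hΨdef, ← Matrix.map_mul, h2, Matrix.map_one π (map_zero π) (map_one π)]
  letI iΦ : Invertible (Matrix.fromBlocks A1 0 0 D1) := ⟨Ψ, hΨΦ, hΦΨ⟩
  letI iA : Invertible A1 := (Matrix.invertibleOfFromBlocksZero₂₁Invertible A1 0 D1).1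
  letI iD : Invertible D1 := (Matrix.invertibleOfFromBlocksZero₂₁Invertible A1 0 D1).2
  have hΨeq : Ψ = Matrix.fromBlocks (⅟A1)
      (-(⅟A1 * (0 : Matrix (Fin n) (Fin 1) (R ⧸ Ideal.span {(p : R)})) * ⅟D1)) 0 (⅟D1) := by
    rw [← Matrix.invOf_fromBlocks_zero₂₁_eq A1
      (0 : Matrix (Fin n) (Fin 1) (R ⧸ Ideal.span {(p : R)})) D1]
    exact (invOf_eq_right_inv hΦΨ).symm
  have hΨ1 : ∀ j : Fin n, Ψ (Sum.inl j) (Sum.inr 0) = 0 := by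
    intro j
    rw [hΨeq]
    simp [Matrix.fromBlocks_apply₁₂]
  have hΨ2 : Ψ (Sum.inr 0) (Sum.inr 0) = ⅟D1 0 0 := by
    rw [hΨeq]
    simp [Matrix.fromBlocks_apply₂₂]
  set e : R ⧸ Ideal.span {(p : R)} := π (d 0 0) with he
  set t : R ⧸ Ideal.span {(p : R)} := ⅟D1 0 0 with ht
  have het : e * t = 1 := by
    have h3 := mul_invOf_self D1
    have h4 := congrFun (congrFun h3 0) 0
    rwa [Matrix.mul_apply, Fin.sum_univ_one, Matrix.one_apply_eq] at h4
  set P : Matrix (Fin n ⊕ Fin 1) (Fin n ⊕ Fin 1) (R ⧸ Ideal.span {(p : R)}) :=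
    (Matrix.fromBlocks
        (a.map ⇑(WittVector.frobenius : WittVector p R →+* WittVector p R)) b
        ((p : WittVector p R) • c.map ⇑(WittVector.frobenius : WittVector p R →+* WittVector p R))
        (d.map ⇑(WittVector.frobenius : WittVector p R →+* WittVector p R))).map π with hP
  have hB'map : B'.map π = P * (B.map π) * Ψ := by
    rw [hB'def, Matrix.map_mul, Matrix.map_mul]
  have hProw : ∀ j : Fin n, P (Sum.inr 0) (Sum.inl j) = 0 := by
    intro j
    simp [hP, Matrix.map_apply, Matrix.fromBlocks_apply₂₁, Matrix.smul_apply, smul_eq_mul,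
      _root_.map_mul, map_natCast, hpS]
  have hPdd : P (Sum.inr 0) (Sum.inr 0) = e ^ p := by
    simp only [hP, Matrix.map_apply, Matrix.fromBlocks_apply₂₂]
    rw [hπdef, w0bar_frobenius, he]
  have hkey : π (B' (Sum.inr 0) (Sum.inr 0)) = e ^ p * π (B (Sum.inr 0) (Sum.inr 0)) * t := by
    have h := congrFun (congrFun hB'map (Sum.inr 0)) (Sum.inr 0)
    rw [Matrix.map_apply] at h
    rw [h, Matrix.mul_apply, Fintype.sum_sum_type]
    simp only [hΨ1, mul_zero, Finset.sum_const_zero, zero_add, Fin.sum_univ_one]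
    rw [Matrix.mul_apply, Fintype.sum_sum_type]
    simp only [hProw, zero_mul, Finset.sum_const_zero, zero_add, Fin.sum_univ_one, hPdd, hΨ2,
      Matrix.map_apply]
  have he' : IsUnit e := IsUnit.of_mul_eq_one (a := e) t het
  have ht' : IsUnit t := IsUnit.of_mul_eq_one (a := t) e (by rwa [mul_comm] at het)
  have hu : IsUnit (e ^ p * t) := (he'.pow p).mul ht'
  have hmain : Ideal.Quotient.mk (Ideal.span {(p : R)}) ((B' (Sum.inr 0) (Sum.inr 0)).coeff 0) =
      (e ^ p * t) * Ideal.Quotient.mk (Ideal.span {(p : R)})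
        ((B (Sum.inr 0) (Sum.inr 0)).coeff 0) := by
    have := hkey
    rw [hπdef, w0bar_apply, w0bar_apply] at this
    rw [this]
    ring
  exact ⟨span_pair_eq_of_assoc _ _ _ _ hu hmain, ⟨e ^ p * t, hu, hmain⟩⟩
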